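/- Let E and F be real Banach spaces, Λ₁ > 0, γ ≥ 0 with 2 γ Λ₁² < 1. Let f : ℝ × E × F → ℝ satisfy |f(τ₁, x, y) − f(τ₂, x, y)| ≥ Λ₁^{−1} |τ₁ − τ₂|, |f(τ, x₁, y) − f(τ, x₂, y)| ≤ Λ₁ ‖x₁ − x₂‖, |f(τ, x, y₁) − f(τ, x, y₂)| ≤ Λ₁ ‖y₁ − y₂‖ for all arguments. For ℓ = 1, 2 let x^{(u,ℓ)} : ℝ → E and x^{(s,ℓ)} : ℝ → F be γ-Lipschitz, and suppose τ₁⁻, τ₂⁻, τ ∈ ℝ satisfy f(τ_ℓ⁻, x^{(u,ℓ)}(τ_ℓ⁻), x^{(s,ℓ)}(τ_ℓ⁻)) = τ for ℓ = 1, 2. Then |τ₁⁻ − τ₂⁻| ≤ [Λ₁ / (Λ₁^{−1} − 2 γ Λ₁)] ( ‖x^{(u,1)}(τ₁⁻) − x^{(u,2)}(τ₁⁻)‖ + ‖x^{(s,1)}(τ₁⁻) − x^{(s,2)}(τ₁⁻)‖ ). -/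
import Mathlib


/-- Estimate (ctr2) in the contraction proof: if two γ-Lipschitz
sections have backward hitting parameters τ₁⁻, τ₂⁻ landing at the same τ under
the expanding map f, then |τ₁⁻ − τ₂⁻| is controlled by the C⁰ distance of the
sections at τ₁⁻. -/
theorem backward_hitting_parameter_estimate
    {E F : Type*} [NormedAddCommGroup E] [NormedSpace ℝ E] [CompleteSpace E]
    [NormedAddCommGroup F] [NormedSpace ℝ F] [CompleteSpace F]
    (f : ℝ → E → F → ℝ) (Λ₁ γ : ℝ) (hΛ₁ : 0 < Λ₁) (hγ : 0 ≤ γ)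
    (hsmall : 2 * γ * Λ₁ ^ 2 < 1)
    (hf1 : ∀ τ₁ τ₂ x y, Λ₁⁻¹ * |τ₁ - τ₂| ≤ |f τ₁ x y - f τ₂ x y|)
    (hf2 : ∀ τ x₁ x₂ y, |f τ x₁ y - f τ x₂ y| ≤ Λ₁ * ‖x₁ - x₂‖)
    (hf3 : ∀ τ x y₁ y₂, |f τ x y₁ - f τ x y₂| ≤ Λ₁ * ‖y₁ - y₂‖)
    (xu₁ xu₂ : ℝ → E) (xs₁ xs₂ : ℝ → F)
    (hxu₁ : ∀ τ₁ τ₂, ‖xu₁ τ₁ - xu₁ τ₂‖ ≤ γ * |τ₁ - τ₂|)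
    (hxu₂ : ∀ τ₁ τ₂, ‖xu₂ τ₁ - xu₂ τ₂‖ ≤ γ * |τ₁ - τ₂|)
    (hxs₁ : ∀ τ₁ τ₂, ‖xs₁ τ₁ - xs₁ τ₂‖ ≤ γ * |τ₁ - τ₂|)
    (hxs₂ : ∀ τ₁ τ₂, ‖xs₂ τ₁ - xs₂ τ₂‖ ≤ γ * |τ₁ - τ₂|)
    (τ₁m τ₂m τ : ℝ)
    (h₁ : f τ₁m (xu₁ τ₁m) (xs₁ τ₁m) = τ)
    (h₂ : f τ₂m (xu₂ τ₂m) (xs₂ τ₂m) = τ) :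
    |τ₁m - τ₂m| ≤ (Λ₁ / (Λ₁⁻¹ - 2 * γ * Λ₁)) *
      (‖xu₁ τ₁m - xu₂ τ₁m‖ + ‖xs₁ τ₁m - xs₂ τ₁m‖) := by
  set d := |τ₁m - τ₂m| with hd
  set A := ‖xu₁ τ₁m - xu₂ τ₁m‖ + ‖xs₁ τ₁m - xs₂ τ₁m‖ with hA
  have hinv : Λ₁⁻¹ * Λ₁ = 1 := inv_mul_cancel₀ hΛ₁.ne'
  have hpos : 0 < Λ₁⁻¹ - 2 * γ * Λ₁ := by nlinarith [inv_pos.mpr hΛ₁]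
  -- key estimate
  have key : Λ₁⁻¹ * d ≤ Λ₁ * (2 * γ * d + A) := by
    have h0 := hf1 τ₁m τ₂m (xu₂ τ₂m) (xs₂ τ₂m)
    rw [h₂, ← h₁] at h0
    have t1 : |f τ₁m (xu₂ τ₂m) (xs₂ τ₂m) - f τ₁m (xu₁ τ₁m) (xs₁ τ₁m)| ≤
        Λ₁ * ‖xu₂ τ₂m - xu₁ τ₁m‖ + Λ₁ * ‖xs₂ τ₂m - xs₁ τ₁m‖ := by
      calc |f τ₁m (xu₂ τ₂m) (xs₂ τ₂m) - f τ₁m (xu₁ τ₁m) (xs₁ τ₁m)|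
          ≤ |f τ₁m (xu₂ τ₂m) (xs₂ τ₂m) - f τ₁m (xu₁ τ₁m) (xs₂ τ₂m)| +
            |f τ₁m (xu₁ τ₁m) (xs₂ τ₂m) - f τ₁m (xu₁ τ₁m) (xs₁ τ₁m)| := abs_sub_le _ _ _
        _ ≤ _ := add_le_add (hf2 _ _ _ _) (hf3 _ _ _ _)
    have t2 : ‖xu₂ τ₂m - xu₁ τ₁m‖ ≤ γ * d + ‖xu₁ τ₁m - xu₂ τ₁m‖ := by
      calc ‖xu₂ τ₂m - xu₁ τ₁m‖ ≤ ‖xu₂ τ₂m - xu₂ τ₁m‖ + ‖xu₂ τ₁m - xu₁ τ₁m‖ :=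
            norm_sub_le_norm_sub_add_norm_sub _ _ _
        _ ≤ γ * d + ‖xu₁ τ₁m - xu₂ τ₁m‖ := by
            rw [norm_sub_rev (xu₂ τ₁m)]
            refine add_le_add ?_ le_rfl
            have := hxu₂ τ₂m τ₁m
            rwa [abs_sub_comm] at this
    have t3 : ‖xs₂ τ₂m - xs₁ τ₁m‖ ≤ γ * d + ‖xs₁ τ₁m - xs₂ τ₁m‖ := by
      calc ‖xs₂ τ₂m - xs₁ τ₁m‖ ≤ ‖xs₂ τ₂m - xs₂ τ₁m‖ + ‖xs₂ τ₁m - xs₁ τ₁m‖ :=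
            norm_sub_le_norm_sub_add_norm_sub _ _ _
        _ ≤ γ * d + ‖xs₁ τ₁m - xs₂ τ₁m‖ := by
            rw [norm_sub_rev (xs₂ τ₁m)]
            refine add_le_add ?_ le_rfl
            have := hxs₂ τ₂m τ₁m
            rwa [abs_sub_comm] at this
    nlinarith [h0, t1, t2, t3]
  have hAnn : 0 ≤ A := by positivity
  rw [div_mul_eq_mul_div, le_div_iff₀ hpos]
  nlinarith [key]
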